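/- Let R be a commutative ring. If every regular prime ideal of R is finitely generated, then every regular ideal of R is finitely generated. -/

import Mathlib

universe u

open MulOpposite Function

open Ideal in
/-- Core lemma: if `P ⊔ (a)` and `(P : a)` are finitely generated, so is `P`. -/
theorem fg_of_sup_span_fg_of_colon_fg {R : Type u} [CommRing R] [DecidableEq R] (P : Ideal R) (a : R)
    (hJ : (P ⊔ span {a}).FG) (hK : (P.colon (span {a})).FG) : P.FG := by
  obtain ⟨s, hs⟩ := hJ
  -- decompose each generator as p + r * a
  have hdecomp : ∀ x ∈ (s : Set R), ∃ p r : R, p ∈ P ∧ p + r * a = x := by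
    intro x hx
    have : x ∈ P ⊔ span {a} := hs ▸ Ideal.subset_span hx
    obtain ⟨p, hp, z, hz, hpz⟩ := Submodule.mem_sup.mp this
    obtain ⟨r, rfl⟩ := Ideal.mem_span_singleton'.mp hz
    exact ⟨p, r, hp, hpz⟩
  choose! p r hp hpr using hdecomp
  have key : P = span (p '' s) ⊔ span {a} * P.colon (span {a}) := by
    apply le_antisymm
    · intro x hx
      have hxJ : x ∈ span (s : Set R) := hs ▸ Ideal.mem_sup_left hx
      obtain ⟨f, -, hf⟩ := Submodule.mem_span_finset.mp hxJ
      have hsum : x = (∑ g ∈ s, f g * p g) + (∑ g ∈ s, f g * r g) * a := by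
        rw [Finset.sum_mul, ← Finset.sum_add_distrib, ← hf]
        refine Finset.sum_congr rfl fun g hg => ?_
        rw [mul_assoc, ← mul_add, hpr g hg, smul_eq_mul]
      set t := ∑ g ∈ s, f g * r g with ht
      have h1 : (∑ g ∈ s, f g * p g) ∈ P :=
        Ideal.sum_mem _ fun g hg => P.mul_mem_left _ (hp g hg)
      have h2 : t * a ∈ P := by
        have : t * a = x - ∑ g ∈ s, f g * p g := by rw [hsum]; ring
        rw [this]; exact P.sub_mem hx h1
      have htK : t ∈ P.colon (span {a}) := Ideal.mem_colon_span_singleton.mpr h2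
      have h1' : (∑ g ∈ s, f g * p g) ∈ span (p '' s) :=
        Ideal.sum_mem _ fun g hg => Ideal.mul_mem_left _ _
          (Ideal.subset_span ⟨g, hg, rfl⟩)
      rw [hsum]
      refine Submodule.add_mem _ (Ideal.mem_sup_left h1') (Ideal.mem_sup_right ?_)
      rw [mul_comm]
      exact Ideal.mul_mem_mul htK (Ideal.mem_span_singleton_self a)
    · refine sup_le ?_ ?_
      · rw [Ideal.span_le]
        rintro _ ⟨g, hg, rfl⟩
        exact hp g hg
      · rw [Ideal.mul_le]
        intro m hm n hn
        obtain ⟨c, rfl⟩ := Ideal.mem_span_singleton'.mp hm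
        have : n * a ∈ P := Ideal.mem_colon_span_singleton.mp hn
        have : c * a * n = c * (n * a) := by ring
        rw [this]
        exact P.mul_mem_left _ ‹n * a ∈ P›
  rw [key]
  exact Submodule.FG.sup ⟨s.image p, by simp⟩
    (Submodule.FG.mul ⟨{a}, by simp⟩ hK)

/-- **Proposition 4.1.** Let `R` be a commutative ring. If every regular prime ideal of
`R` is finitely generated, then every regular ideal of `R` is finitely generated. -/
theorem regular_ideals_fg_of_regular_primes_fg (R : Type u) [CommRing R]
    (h : ∀ P : Ideal R, P.IsPrime → (∃ r ∈ P, r ∈ nonZeroDivisors R) → P.FG) :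
    ∀ I : Ideal R, (∃ r ∈ I, r ∈ nonZeroDivisors R) → I.FG := by
  intro I hI
  by_contra hIfg
  -- Zorn's lemma on regular non-f.g. ideals
  set S : Set (Ideal R) := {J | (∃ r ∈ J, r ∈ nonZeroDivisors R) ∧ ¬ J.FG} with hS
  have hchain : ∀ c ⊆ S, IsChain (· ≤ ·) c → ∀ y ∈ c, ∃ ub ∈ S, ∀ z ∈ c, z ≤ ub := by
    intro c hcS hc J hJ
    refine ⟨sSup c, ⟨?_, ?_⟩, fun z hz => le_sSup hz⟩
    · obtain ⟨⟨r, hr, hrreg⟩, -⟩ := hcS hJ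
      exact ⟨r, le_sSup hJ hr, hrreg⟩
    · intro ⟨s, hs⟩
      have hdir : DirectedOn (· ≤ ·) c := hc.directedOn
      have hmem : ∀ x ∈ (s : Set R), ∃ J ∈ c, x ∈ J := by
        intro x hx
        exact (Submodule.mem_sSup_of_directed ⟨J, hJ⟩ hdir).mp (hs ▸ Ideal.subset_span hx)
      have hcover : ∀ t : Finset R, (∀ x ∈ (t : Set R), ∃ J ∈ c, x ∈ J) →
          ∃ K ∈ c, (t : Set R) ⊆ K := by
        classical
        intro t
        induction t using Finset.induction with
        | empty => exact fun _ => ⟨J, hJ, by simp⟩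
        | @insert x t hxs ih =>
          intro hmem'
          obtain ⟨K, hK, hKs⟩ := ih fun y hy => hmem' y (Finset.mem_insert_of_mem hy)
          obtain ⟨L, hL, hxL⟩ := hmem' x (Finset.mem_insert_self x t)
          obtain ⟨M, hM, hKM, hLM⟩ := hdir K hK L hL
          refine ⟨M, hM, ?_⟩
          intro y hy
          rcases Finset.mem_insert.mp hy with rfl | hy
          · exact hLM hxL
          · exact hKM (hKs hy)
      obtain ⟨K, hKc, hsK⟩ := hcover s hmem
      have hKtop : K = sSup c := le_antisymm (le_sSup hKc) (by rw [← hs]; exact Ideal.span_le.mpr hsK)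
      exact (hcS hKc).2 ⟨s, by rw [hs, ← hKtop]⟩
  obtain ⟨P, -, hPS, hPmax⟩ := zorn_le_nonempty₀ S hchain I ⟨hI, hIfg⟩
  obtain ⟨⟨r, hrP, hrreg⟩, hPfg⟩ := hPS
  -- every ideal strictly above P is f.g.
  have hgt : ∀ J : Ideal R, P < J → J.FG := by
    intro J hJ
    by_contra hJfg
    exact hJ.not_ge (hPmax ⟨⟨r, hJ.le hrP, hrreg⟩, hJfg⟩ hJ.le)
  -- P is prime
  have hPprime : P.IsPrime := by
    constructor
    · intro htop
      exact hPfg (htop ▸ ⟨{1}, by simp⟩)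
    · intro a b hab
      by_contra hcon
      push_neg at hcon
      obtain ⟨ha, hb⟩ := hcon
      have hJfg : (P ⊔ Ideal.span {a}).FG := by
        refine hgt _ (lt_of_le_of_ne le_sup_left fun he => ha ?_)
        rw [he]
        exact Ideal.mem_sup_right (Ideal.mem_span_singleton_self a)
      have hKfg : (P.colon (Ideal.span {a})).FG := by
        refine hgt _ (lt_of_le_of_ne (fun x hx => ?_) fun he => hb ?_)
        · exact Ideal.mem_colon_span_singleton.mpr (P.mul_mem_right a hx)
        · rw [he]
          exact Ideal.mem_colon_span_singleton.mpr (by rwa [mul_comm])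
      classical
      exact hPfg (fg_of_sup_span_fg_of_colon_fg P a hJfg hKfg)
  exact hPfg (h P hPprime ⟨r, hrP, hrreg⟩)
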